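/- On a path L^n with window size λ, consider a target set S containing i but containing no vertex strictly between i and j, where j is the second-smallest element of S, D[i] = min{x > i : t(x)=2}, and t(D[i])=2 with D[i] ∉ S. If D[i] < j < 2·D[i] − i − λ + 1, then S is not a TWC target set (node D[i] is never influenced). -/

import Mathlib

set_option linter.unusedVariables false

open Finset

variable {V : Type*} [Fintype V] [DecidableEq V]

/-- `influenced G t lam S r` : set of influenced nodes after round `r`. -/
def influenced (G : SimpleGraph V) [DecidableRel G.Adj] (t : V → ℕ) (lam : ℕ)
    (S : Finset V) : ℕ → Finset V
  | 0 => S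
  | r + 1 =>
    let prev := influenced G t lam S r
    let A := if r + 1 ≤ lam then prev else prev \ influenced G t lam S (r - lam)
    prev ∪ Finset.univ.filter fun v => t v ≤ (G.neighborFinset v ∩ A).card
  termination_by r => r
  decreasing_by all_goals omega

/-- `activeSet G t lam S r` : set of active nodes at round `r`. -/
def activeSet (G : SimpleGraph V) [DecidableRel G.Adj] (t : V → ℕ) (lam : ℕ)
    (S : Finset V) (r : ℕ) : Finset V :=
  if r = 0 then ∅
  else if r ≤ lam then influenced G t lam S (r - 1)
  else influenced G t lam S (r - 1) \ influenced G t lam S (r - 1 - lam)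

def isTargetSet (G : SimpleGraph V) [DecidableRel G.Adj] (t : V → ℕ) (lam : ℕ)
    (S : Finset V) : Prop :=
  ∃ r, influenced G t lam S r = Finset.univ

def pathGraph (n : ℕ) : SimpleGraph (Fin n) where
  Adj i j := i.val + 1 = j.val ∨ j.val + 1 = i.val
  symm := ⟨fun i j h => h.symm⟩
  loopless := ⟨fun i h => by rcases h with h | h <;> omega⟩

instance (n : ℕ) : DecidableRel (pathGraph n).Adj :=
  fun i j => inferInstanceAs (Decidable (i.val + 1 = j.val ∨ j.val + 1 = i.val))

def ringGraph (n : ℕ) : SimpleGraph (Fin n) where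
  Adj i j := i ≠ j ∧ ((i.val + 1) % n = j.val ∨ (j.val + 1) % n = i.val)
  symm := ⟨fun i j h => ⟨h.1.symm, h.2.symm⟩⟩
  loopless := ⟨fun i h => h.1 rfl⟩

instance (n : ℕ) : DecidableRel (ringGraph n).Adj :=
  fun i j => inferInstanceAs (Decidable (_ ∧ (_ ∨ _)))

instance : DecidableRel (⊤ : SimpleGraph V).Adj :=
  fun a b => inferInstanceAs (Decidable (a ≠ b))



lemma influenced_zero (G : SimpleGraph V) [DecidableRel G.Adj] (t : V → ℕ) (lam : ℕ)
    (S : Finset V) : influenced G t lam S 0 = S := by rw [influenced]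

lemma influenced_succ (G : SimpleGraph V) [DecidableRel G.Adj] (t : V → ℕ) (lam : ℕ)
    (S : Finset V) (r : ℕ) :
    influenced G t lam S (r+1) =
      influenced G t lam S r ∪ Finset.univ.filter (fun v => t v ≤
        ((G.neighborFinset v) ∩ (if r + 1 ≤ lam then influenced G t lam S r
          else influenced G t lam S r \ influenced G t lam S (r - lam))).card) := by
  rw [influenced]

lemma influenced_mono (G : SimpleGraph V) [DecidableRel G.Adj] (t : V → ℕ) (lam : ℕ)
    (S : Finset V) {r s : ℕ} (h : r ≤ s) :
    influenced G t lam S r ⊆ influenced G t lam S s := by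
  induction s, h using Nat.le_induction with
  | base => exact Finset.Subset.refl _
  | succ s hs ih =>
    refine ih.trans ?_
    rw [influenced_succ]
    exact Finset.subset_union_left

/-- on a path with `t(0)=t(n-1)=2`, if `S` has smallest element `i`
and second-smallest element `j`, `d = D[i]` is the first threshold-2 vertex after
`i`, `d ∉ S`, and `D[i] < j < 2·D[i] − i − λ + 1` (i.e. `j + i + λ < 2d + 1`),
then `d` is never influenced and `S` is not a TWC target set. -/
theorem stmt8 (n lam : ℕ) (hn : 2 ≤ n) (hlam : 1 ≤ lam) (t : Fin n → ℕ)
    (htv : ∀ v, t v = 1 ∨ t v = 2)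
    (h0 : t ⟨0, by omega⟩ = 2) (hlast : t ⟨n - 1, by omega⟩ = 2)
    (S : Finset (Fin n)) (i j d : Fin n)
    (hiS : i ∈ S) (hjS : j ∈ S) (himin : ∀ x ∈ S, i ≤ x)
    (hij : i < j) (hjsec : ∀ x ∈ S, i < x → j ≤ x)
    (hid : i < d) (htd : t d = 2)
    (hbetween : ∀ x : Fin n, i < x → x < d → t x = 1) (hdS : d ∉ S)
    (hdj : d < j) (hupper : (j : ℕ) + (i : ℕ) + lam < 2 * (d : ℕ) + 1) :
    (∀ r : ℕ, d ∉ influenced (pathGraph n) t lam S r) ∧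
    ¬ isTargetSet (pathGraph n) t lam S := by
  classical
  have hjn : (j:ℕ) < n := j.isLt
  have hid' : (i:ℕ) < (d:ℕ) := hid
  have hdj' : (d:ℕ) < (j:ℕ) := hdj
  set I : ℕ → Finset (Fin n) := influenced (pathGraph n) t lam S with hIdef
  have hmono : ∀ {r s : ℕ}, r ≤ s → I r ⊆ I s := fun h => influenced_mono _ _ _ _ h
  have hS0 : ∀ r, S ⊆ I r := by
    intro r x hx
    have : x ∈ I 0 := by rw [hIdef, influenced_zero]; exact hx
    exact hmono (Nat.zero_le r) this
  have hadj : ∀ v u : Fin n, u ∈ (pathGraph n).neighborFinset v ↔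
      ((v:ℕ)+1 = (u:ℕ) ∨ (u:ℕ)+1 = (v:ℕ)) := by
    intro v u
    rw [SimpleGraph.mem_neighborFinset]
    exact Iff.rfl
  have key : ∀ r, (d ∉ I r) ∧
      (∀ v : Fin n, (v:ℕ) < (d:ℕ) → v ∈ I r → (v:ℕ) ≤ (i:ℕ) + r) ∧
      (∀ v : Fin n, (d:ℕ) < (v:ℕ) → (v:ℕ) < (j:ℕ) → v ∈ I r → (j:ℕ) ≤ (v:ℕ) + r ∧
        ∀ x : Fin n, (v:ℕ) ≤ (x:ℕ) → (x:ℕ) < (j:ℕ) → t x = 1) ∧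
      (∀ v : Fin n, (d:ℕ) < (v:ℕ) → (v:ℕ) + r = (j:ℕ) →
        (∀ x : Fin n, (v:ℕ) ≤ (x:ℕ) → (x:ℕ) < (j:ℕ) → t x = 1) → v ∈ I r) := by
    intro r
    induction r using Nat.strong_induction_on with
    | _ r IH =>
    match r with
    | 0 =>
      refine ⟨?_, ?_, ?_, ?_⟩
      · rw [hIdef, influenced_zero]; exact hdS
      · intro v hvd hv
        rw [hIdef, influenced_zero] at hv
        by_contra h
        have h2 : i < v := by rw [Fin.lt_def]; omega
        have h3 := hjsec v hv h2
        rw [Fin.le_def] at h3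
        omega
      · intro v hdv hvj hv
        exfalso
        rw [hIdef, influenced_zero] at hv
        have h2 : i < v := by rw [Fin.lt_def]; omega
        have h3 := hjsec v hv h2
        rw [Fin.le_def] at h3
        omega
      · intro v hdv hvj hx
        rw [hIdef, influenced_zero, show v = j from Fin.ext (by omega)]
        exact hjS
    | r + 1 =>
      obtain ⟨hAr, hLr, hQr, hFr⟩ := IH r (Nat.lt_succ_self r)
      have hmem : ∀ v : Fin n, v ∈ I (r+1) ↔ v ∈ I r ∨
          t v ≤ ((pathGraph n).neighborFinset v ∩
            (if r + 1 ≤ lam then I r else I r \ I (r - lam))).card := by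
        intro v
        rw [hIdef, influenced_succ, Finset.mem_union, Finset.mem_filter]
        simp
      have hAsub : (if r + 1 ≤ lam then I r else I r \ I (r - lam)) ⊆ I r := by
        by_cases hrl : r + 1 ≤ lam
        · rw [if_pos hrl]
        · rw [if_neg hrl]; exact Finset.sdiff_subset
      have hAout : ¬ (r + 1 ≤ lam) →
          ∀ u ∈ (if r + 1 ≤ lam then I r else I r \ I (r - lam)), u ∉ I (r - lam) := by
        intro h u hu
        rw [if_neg h, Finset.mem_sdiff] at hu
        exact hu.2
      have hone : ∀ v : Fin n, v ∈ I (r+1) → v ∉ I r →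
          ∃ u, u ∈ (if r + 1 ≤ lam then I r else I r \ I (r - lam)) ∧
            ((v:ℕ)+1 = (u:ℕ) ∨ (u:ℕ)+1 = (v:ℕ)) := by
        intro v hv hv'
        rcases (hmem v).mp hv with h | h
        · exact absurd h hv'
        · have h1 : 1 ≤ t v := by rcases htv v with h1 | h1 <;> omega
          obtain ⟨u, hu⟩ := Finset.card_pos.mp (Nat.lt_of_lt_of_le h1 h)
          rw [Finset.mem_inter] at hu
          exact ⟨u, hu.2, (hadj v u).mp hu.1⟩
      have htwo : ∀ v : Fin n, v ∈ I (r+1) → v ∉ I r → t v = 2 →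
          ∃ u1 u2, u1 ∈ (if r + 1 ≤ lam then I r else I r \ I (r - lam)) ∧
            u2 ∈ (if r + 1 ≤ lam then I r else I r \ I (r - lam)) ∧
            (u1:ℕ)+1 = (v:ℕ) ∧ (v:ℕ)+1 = (u2:ℕ) := by
        intro v hv hv' ht2
        rcases (hmem v).mp hv with h | h
        · exact absurd h hv'
        · rw [ht2] at h
          obtain ⟨u1, hu1, u2, hu2, hne⟩ := Finset.one_lt_card.mp h
          rw [Finset.mem_inter] at hu1 hu2
          have h1 := (hadj v u1).mp hu1.1
          have h2 := (hadj v u2).mp hu2.1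
          have hne' : (u1:ℕ) ≠ (u2:ℕ) := fun hh => hne (Fin.ext hh)
          rcases h1 with h1 | h1 <;> rcases h2 with h2 | h2
          · omega
          · exact ⟨u2, u1, hu2.2, hu1.2, h2, h1⟩
          · exact ⟨u1, u2, hu1.2, hu2.2, h1, h2⟩
          · omega
      have hA' : d ∉ I (r+1) := by
        intro hd
        obtain ⟨u1, u2, hu1A, hu2A, hu1v, hu2v⟩ := htwo d hd hAr htd
        have hu1I : u1 ∈ I r := hAsub hu1A
        have hL1 : (u1:ℕ) ≤ (i:ℕ) + r := hLr u1 (by omega) hu1I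
        have hdle : (d:ℕ) ≤ (i:ℕ) + r + 1 := by omega
        by_cases hrl : r + 1 ≤ lam
        · omega
        · have hu2I : u2 ∈ I r := hAsub hu2A
          have hu2out : u2 ∉ I (r - lam) := hAout hrl u2 hu2A
          by_cases hj2 : (u2:ℕ) = (j:ℕ)
          · exact hu2out (hS0 _ (by rw [show u2 = j from Fin.ext hj2]; exact hjS))
          · have hu2j : (u2:ℕ) < (j:ℕ) := by omega
            have hQ2 := hQr u2 (by omega) hu2j hu2I
            have hk : (j:ℕ) - (d:ℕ) - 1 ≤ r := by
              have := hQ2.1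
              omega
            obtain ⟨_, _, _, hFk⟩ := IH ((j:ℕ) - (d:ℕ) - 1) (by omega)
            have hu2k : u2 ∈ I ((j:ℕ) - (d:ℕ) - 1) :=
              hFk u2 (by omega) (by omega) hQ2.2
            exact hu2out (hmono (by omega) hu2k)
      refine ⟨hA', ?_, ?_, ?_⟩
      · -- L
        intro v hvd hv
        by_cases hvr : v ∈ I r
        · have := hLr v hvd hvr; omega
        · obtain ⟨u, huA, hor⟩ := hone v hv hvr
          have huI : u ∈ I r := hAsub huA
          rcases hor with h | h
          · by_cases hud : (u:ℕ) = (d:ℕ)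
            · exact absurd (by rw [show u = d from Fin.ext hud] at huI; exact huI) hAr
            · have := hLr u (by omega) huI; omega
          · have := hLr u (by omega) huI; omega
      · -- Q
        intro v hdv hvj hv
        by_cases hvr : v ∈ I r
        · obtain ⟨h1, h2⟩ := hQr v hdv hvj hvr
          exact ⟨by omega, h2⟩
        · have htv1 : t v = 1 := by
            rcases htv v with h1 | h1
            · exact h1
            · exfalso
              obtain ⟨u1, u2, hu1A, _, hu1v, _⟩ := htwo v hv hvr h1
              have hu1I : u1 ∈ I r := hAsub hu1A
              by_cases hud : (u1:ℕ) = (d:ℕ)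
              · exact hAr (by rw [show u1 = d from Fin.ext hud] at hu1I; exact hu1I)
              · have hQ1 := hQr u1 (by omega) (by omega) hu1I
                have := hQ1.2 v (by omega) hvj
                omega
          obtain ⟨u, huA, hor⟩ := hone v hv hvr
          have huI : u ∈ I r := hAsub huA
          rcases hor with h | h
          · by_cases huj : (u:ℕ) = (j:ℕ)
            · refine ⟨by omega, ?_⟩
              intro x hvx hxj
              rw [show x = v from Fin.ext (by omega)]
              exact htv1
            · have hQ1 := hQr u (by omega) (by omega) huI
              refine ⟨by have := hQ1.1; omega, ?_⟩
              intro x hvx hxj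
              by_cases hxv : (x:ℕ) = (v:ℕ)
              · rw [show x = v from Fin.ext hxv]; exact htv1
              · exact hQ1.2 x (by omega) hxj
          · by_cases hud : (u:ℕ) = (d:ℕ)
            · exact absurd (by rw [show u = d from Fin.ext hud] at huI; exact huI) hAr
            · have hQ1 := hQr u (by omega) (by omega) huI
              refine ⟨by have := hQ1.1; omega, ?_⟩
              intro x hx1 hx2
              exact hQ1.2 x (by omega) hx2
      · -- F
        intro v hdv hvr hx
        have hvj : (v:ℕ) < (j:ℕ) := by omega
        have hun : (v:ℕ) + 1 < n := by omega
        set u : Fin n := ⟨(v:ℕ)+1, hun⟩ with hudef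
        have huval : (u:ℕ) = (v:ℕ)+1 := rfl
        have huI : u ∈ I r := by
          refine hFr u (by omega) (by omega) ?_
          intro x h1 h2
          exact hx x (by omega) h2
        have huA : u ∈ (if r + 1 ≤ lam then I r else I r \ I (r - lam)) := by
          by_cases hrl : r + 1 ≤ lam
          · rw [if_pos hrl]; exact huI
          · rw [if_neg hrl, Finset.mem_sdiff]
            refine ⟨huI, ?_⟩
            intro hbad
            obtain ⟨_, _, hQrl, _⟩ := IH (r - lam) (by omega)
            have := (hQrl u (by omega) (by omega) hbad).1
            omega
        refine (hmem v).mpr (Or.inr ?_)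
        rw [hx v (le_refl _) hvj]
        exact Finset.card_pos.mpr
          ⟨u, Finset.mem_inter.mpr ⟨(hadj v u).mpr (Or.inl huval.symm), huA⟩⟩
  have hkey1 : ∀ r : ℕ, d ∉ I r := fun r => (key r).1
  refine ⟨hkey1, ?_⟩
  intro hts
  obtain ⟨r, hr⟩ := hts
  have : d ∈ influenced (pathGraph n) t lam S r := by
    rw [hr]; exact Finset.mem_univ d
  exact hkey1 r this
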